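/- arXiv:1309.7290 — 3 statements merged into one kernel-verified Lean document; each statement's English description precedes it below -/
import Mathlib

section
/- Let k₀ : G × G → ℂ be a measurable positive type kernel on a locally compact second countable group G, bounded on every tube (in particular bounded, by the positive type property and boundedness on the diagonal), and let f : G → [0,∞) be continuous, compactly supported with ∫ f = 1. Then the kernel k(s,t) = ∫∫ f(v) f(w) k₀(sv, tw) dμ(v) dμ(w) is again of positive type. -/
open MeasureTheory
open scoped ComplexOrder
open scoped NNReal ENNReal

/-- A kernel is of positive type if all matrices `(k(sᵢ,sⱼ))ᵢⱼ` are positive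
semidefinite. -/
def IsPositiveTypeKernel {G : Type*} (k : G → G → ℂ) : Prop :=
  ∀ (n : ℕ) (s : Fin n → G) (lam : Fin n → ℂ),
    0 ≤ ∑ i, ∑ j, lam i * (starRingEnd ℂ) (lam j) * k (s j) (s i)

section maps
variable {G : Type*} [MeasurableSpace G] (ν : Measure G) [IsProbabilityMeasure ν]

lemma pi_map_eval {M : ℕ} (a : Fin M) :
    Measure.map (fun x : Fin M → G => x a) (Measure.pi fun _ => ν) = ν := by
  ext s hs
  rw [Measure.map_apply (measurable_pi_apply a) hs]
  have h : (fun x : Fin M → G => x a) ⁻¹' s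
      = Set.pi Set.univ (Function.update (fun _ => Set.univ) a s) := Set.eval_preimage
  rw [h, Measure.pi_pi]
  have h2 : (fun i : Fin M => ν (Function.update (fun _ => Set.univ) a s i))
      = Function.update (fun _ => ν Set.univ) a (ν s) := by
    funext i
    rcases eq_or_ne i a with rfl | hia
    · simp
    · simp [Function.update_of_ne hia]
  rw [h2, Finset.prod_update_of_mem (Finset.mem_univ a)]
  simp

lemma pi_map_pair {M : ℕ} (a b : Fin M) (hba : b ≠ a) :
    Measure.map (fun x : Fin M → G => (x b, x a)) (Measure.pi fun _ => ν) = ν.prod ν := by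
  symm
  apply Measure.prod_eq
  intro s t hs ht
  have hφ : Measurable (fun x : Fin M → G => (x b, x a)) :=
    (measurable_pi_apply b).prodMk (measurable_pi_apply a)
  rw [Measure.map_apply hφ (hs.prod ht)]
  have h : (fun x : Fin M → G => (x b, x a)) ⁻¹' (s ×ˢ t)
      = Set.pi Set.univ
          (Function.update (Function.update (fun _ => Set.univ) b s) a t) := by
    ext x
    simp only [Set.mem_preimage, Set.mem_prod, Set.mem_pi, Set.mem_univ, true_implies]
    constructor
    · rintro ⟨h1, h2⟩ i
      rcases eq_or_ne i a with rfl | hia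
      · simpa using h2
      · rcases eq_or_ne i b with rfl | hib
        · simpa [Function.update_of_ne hba, Function.update_of_ne hia] using h1
        · simp [Function.update_of_ne hia, Function.update_of_ne hib]
    · intro h
      refine ⟨?_, ?_⟩
      · have := h b
        rwa [Function.update_of_ne hba, Function.update_self] at this
      · have := h a
        rwa [Function.update_self] at this
  rw [h, Measure.pi_pi]
  have h2 : (fun i : Fin M => ν ((Function.update (Function.update (fun _ => Set.univ) b s) a t) i))
      = Function.update (Function.update (fun _ => ν Set.univ) b (ν s)) a (ν t) := by
    funext i
    rcases eq_or_ne i a with rfl | hia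
    · simp
    · rcases eq_or_ne i b with rfl | hib
      · simp [Function.update_of_ne hba, Function.update_of_ne hia]
      · simp [Function.update_of_ne hia, Function.update_of_ne hib]
  rw [h2, Finset.prod_update_of_mem (Finset.mem_univ a)]
  rw [Finset.prod_update_of_mem (by simp [hba] : b ∈ Finset.univ \ {a})]
  simp [mul_comm]

end maps

lemma integral_integral_nonneg_of_posType {G : Type*} [MeasurableSpace G]
    (ν : Measure G) [IsProbabilityMeasure ν]
    (Q : G → G → ℂ) (hQm : Measurable fun p : G × G => Q p.1 p.2)
    (C : ℝ) (hC : ∀ v w, ‖Q v w‖ ≤ C)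
    (hQpos : IsPositiveTypeKernel Q) :
    0 ≤ ∫ v, ∫ w, Q v w ∂ν ∂ν := by
  classical
  set T : ℂ := ∫ p : G × G, Q p.1 p.2 ∂(ν.prod ν) with hTdef
  set D : ℂ := ∫ u, Q u u ∂ν with hDdef
  have hint : Integrable (fun p : G × G => Q p.1 p.2) (ν.prod ν) :=
    (integrable_const C).mono' hQm.aestronglyMeasurable
      (Filter.Eventually.of_forall fun p => hC p.1 p.2)
  have hT : T = ∫ v, ∫ w, Q v w ∂ν ∂ν := integral_prod _ hint
  -- the key inequality for every M = N + 2
  have key : ∀ N : ℕ,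
      (0:ℂ) ≤ (((N:ℝ) + 2) * ((N:ℝ) + 1) : ℝ) * T + (((N:ℝ) + 2 : ℝ) : ℂ) * D := by
    intro N
    set M : ℕ := N + 2 with hM
    set π : Measure (Fin M → G) := Measure.pi (fun _ => ν) with hπ
    have hφm : ∀ a b : Fin M, Measurable (fun x : Fin M → G => (x b, x a)) :=
      fun a b => (measurable_pi_apply b).prodMk (measurable_pi_apply a)
    have hintπ : ∀ a b : Fin M, Integrable (fun x : Fin M → G => Q (x b) (x a)) π := by
      intro a b
      exact (integrable_const C).mono'
        (hQm.comp (hφm a b)).aestronglyMeasurable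
        (Filter.Eventually.of_forall fun x => hC _ _)
    have hterm : ∀ a b : Fin M, (∫ x, Q (x b) (x a) ∂π) = if a = b then D else T := by
      intro a b
      by_cases hab : a = b
      · subst hab
        rw [if_pos rfl]
        have hg : Measurable (fun u : G => Q u u) :=
          hQm.comp (measurable_id.prodMk measurable_id)
        have hmeq : Measure.map (fun x : Fin M → G => x a) π = ν := pi_map_eval ν a
        have hsm : AEStronglyMeasurable (fun u : G => Q u u)
            (Measure.map (fun x : Fin M → G => x a) π) := by
          rw [hmeq]; exact hg.aestronglyMeasurable
        have hh := integral_map (μ := π) (φ := fun x : Fin M → G => x a)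
          (measurable_pi_apply a).aemeasurable hsm
        rw [← hh, hmeq]
      · rw [if_neg hab]
        have hba : b ≠ a := fun h => hab h.symm
        have hmeq : Measure.map (fun x : Fin M → G => (x b, x a)) π = ν.prod ν :=
          pi_map_pair ν a b hba
        have hsm : AEStronglyMeasurable (fun p : G × G => Q p.1 p.2)
            (Measure.map (fun x : Fin M → G => (x b, x a)) π) := by
          rw [hmeq]; exact hQm.aestronglyMeasurable
        have hh := integral_map (μ := π) (φ := fun x : Fin M → G => (x b, x a))
          (hφm a b).aemeasurable hsm
        rw [← hh, hmeq]
    have hposint : (0:ℂ) ≤ ∫ x, (∑ a : Fin M, ∑ b : Fin M, Q (x b) (x a)) ∂π := by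
      have hptws : ∀ x : Fin M → G, (0:ℂ) ≤ ∑ a : Fin M, ∑ b : Fin M, Q (x b) (x a) := by
        intro x
        have := hQpos M x (fun _ => 1)
        simpa using this
      have hintF : Integrable (fun x : Fin M → G => ∑ a : Fin M, ∑ b : Fin M, Q (x b) (x a)) π :=
        integrable_finset_sum _ fun a _ => integrable_finset_sum _ fun b _ => hintπ a b
      rw [Complex.le_def]
      constructor
      · simp only [Complex.zero_re]
        have h := integral_re hintF
        simp only [RCLike.re_to_complex] at h
        rw [← h]
        apply integral_nonneg
        intro x
        exact (Complex.le_def.1 (hptws x)).1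
      · simp only [Complex.zero_im]
        have h := integral_im hintF
        simp only [RCLike.im_to_complex] at h
        rw [← h]
        symm
        have hz : ∀ x : Fin M → G, (∑ a : Fin M, ∑ b : Fin M, Q (x b) (x a)).im = 0 :=
          fun x => ((Complex.le_def.1 (hptws x)).2).symm
        simp only [hz]
        exact integral_zero _ _
    have hsum : (∫ x, (∑ a : Fin M, ∑ b : Fin M, Q (x b) (x a)) ∂π)
        = (((N:ℝ) + 2) * ((N:ℝ) + 1) : ℝ) * T + (((N:ℝ) + 2 : ℝ) : ℂ) * D := by
      rw [integral_finset_sum _ fun a _ => integrable_finset_sum _ fun b _ => hintπ a b]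
      have : ∀ a : Fin M, (∫ x, (∑ b : Fin M, Q (x b) (x a)) ∂π)
          = ∑ b : Fin M, (if a = b then D else T) := by
        intro a
        rw [integral_finset_sum _ fun b _ => hintπ a b]
        exact Finset.sum_congr rfl fun b _ => hterm a b
      simp only [this]
      have h1 : ∀ a : Fin M, (∑ b : Fin M, (if a = b then D else T))
          = (D - T) + (M : ℂ) * T := by
        intro a
        have : ∀ b : Fin M, (if a = b then D else T) = (if a = b then D - T else 0) + T := by
          intro b; split_ifs <;> ring
        simp only [this, Finset.sum_add_distrib, Finset.sum_ite_eq, Finset.mem_univ, if_pos,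
          Finset.sum_const, Finset.card_univ, Fintype.card_fin, nsmul_eq_mul]
      simp only [h1, Finset.sum_const, Finset.card_univ, Fintype.card_fin, nsmul_eq_mul, hM]
      push_cast
      ring
    rw [← hsum]
    exact hposint
  -- extract real and imaginary parts
  have hre : ∀ N : ℕ, 0 ≤ ((N:ℝ) + 2) * ((N:ℝ) + 1) * T.re + ((N:ℝ) + 2) * D.re := by
    intro N
    have := (Complex.le_def.1 (key N)).1
    simpa [Complex.add_re, Complex.re_ofReal_mul] using this
  have him : ∀ N : ℕ, ((N:ℝ) + 2) * ((N:ℝ) + 1) * T.im + ((N:ℝ) + 2) * D.im = 0 := by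
    intro N
    have := (Complex.le_def.1 (key N)).2
    simpa [Complex.add_im, Complex.im_ofReal_mul] using this.symm
  have hTim : T.im = 0 := by
    have h0 := him 0
    have h1 := him 1
    norm_num at h0 h1
    linarith
  have hTre : 0 ≤ T.re := by
    have hb : ∀ N : ℕ, -D.re / ((N:ℝ) + 1) ≤ T.re := by
      intro N
      have h := hre N
      rw [div_le_iff₀ (by positivity : (0:ℝ) < (N:ℝ) + 1)]
      nlinarith [h, (by positivity : (0:ℝ) < (N:ℝ) +2)]
    have hlim : Filter.Tendsto (fun N : ℕ => -D.re / ((N:ℝ) + 1)) Filter.atTop (nhds 0) := by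
      have := tendsto_one_div_add_atTop_nhds_zero_nat (𝕜 := ℝ)
      have h2 := this.const_mul (-D.re)
      simpa [div_eq_mul_inv, mul_comm, mul_left_comm] using h2
    exact le_of_tendsto' hlim hb
  have : (0:ℂ) ≤ T := by
    rw [Complex.le_def]
    exact ⟨by simpa using hTre, by simp [hTim]⟩
  rwa [hT] at this

theorem convolution_preserves_positive_type
    {G : Type*} [TopologicalSpace G] [Group G] [IsTopologicalGroup G]
    [LocallyCompactSpace G] [SecondCountableTopology G] [T2Space G]
    [MeasurableSpace G] [BorelSpace G]
    (μ : Measure G) [μ.IsHaarMeasure]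
    (k₀ : G → G → ℂ)
    (hmeas : Measurable (fun p : G × G => k₀ p.1 p.2))
    (hbdd : ∃ C : ℝ, ∀ s t, ‖k₀ s t‖ ≤ C)
    (hpos : IsPositiveTypeKernel k₀)
    (f : G → ℝ) (hfc : Continuous f) (hfs : HasCompactSupport f)
    (hf0 : ∀ t, 0 ≤ f t) (hf1 : ∫ t, f t ∂μ = 1) :
    IsPositiveTypeKernel
      (fun s t => ∫ v, ∫ w, ((f v : ℂ) * (f w : ℂ)) * k₀ (s * v) (t * w) ∂μ ∂μ) := by
  intro n s lam
  classical
  obtain ⟨C, hC⟩ := hbdd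
  set fn : G → ℝ≥0 := fun a => Real.toNNReal (f a) with hfn
  have hfnm : Measurable fn := measurable_real_toNNReal.comp hfc.measurable
  set ν : Measure G := μ.withDensity (fun a => (fn a : ℝ≥0∞)) with hν
  have hfi : Integrable f μ := hfc.integrable_of_hasCompactSupport hfs
  haveI hprob : IsProbabilityMeasure ν := by
    constructor
    rw [hν, withDensity_apply _ MeasurableSet.univ, Measure.restrict_univ]
    have h := MeasureTheory.ofReal_integral_eq_lintegral_ofReal hfi
      (Filter.Eventually.of_forall hf0)
    rw [hf1] at h
    have hcoe : ∀ a, ((fn a : ℝ≥0) : ℝ≥0∞) = ENNReal.ofReal (f a) := fun a => rfl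
    simp only [hcoe]
    rw [← h]
    norm_num
  have hconv : ∀ g : G → ℂ, (∫ a, g a ∂ν) = ∫ a, (f a : ℂ) * g a ∂μ := by
    intro g
    rw [hν, integral_withDensity_eq_integral_smul hfnm]
    congr 1
    funext a
    rw [NNReal.smul_def, Real.coe_toNNReal _ (hf0 a), Complex.real_smul]
  have hkmeas : ∀ i j : Fin n, Measurable (fun p : G × G => k₀ (s j * p.1) (s i * p.2)) :=
    fun i j => hmeas.comp
      ((measurable_const.mul measurable_fst).prodMk (measurable_const.mul measurable_snd))
  have hinner_meas : ∀ i j : Fin n, Measurable (fun v => ∫ w, k₀ (s j * v) (s i * w) ∂ν) :=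
    fun i j => ((hkmeas i j).stronglyMeasurable.integral_prod_right').measurable
  have hinner_bdd : ∀ i j : Fin n, ∀ v, ‖∫ w, k₀ (s j * v) (s i * w) ∂ν‖ ≤ C := by
    intro i j v
    have := norm_integral_le_of_norm_le_const
      (μ := ν) (f := fun w => k₀ (s j * v) (s i * w)) (C := C)
      (Filter.Eventually.of_forall fun w => hC _ _)
    simpa using this
  -- convert the μ-double integrals to ν-double integrals
  have hterm : ∀ i j : Fin n,
      (∫ v, ∫ w, ((f v : ℂ) * (f w : ℂ)) * k₀ (s j * v) (s i * w) ∂μ ∂μ)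
      = ∫ v, ∫ w, k₀ (s j * v) (s i * w) ∂ν ∂ν := by
    intro i j
    have h1 : ∀ v, (∫ w, ((f v : ℂ) * (f w : ℂ)) * k₀ (s j * v) (s i * w) ∂μ)
        = (f v : ℂ) * ∫ w, k₀ (s j * v) (s i * w) ∂ν := by
      intro v
      rw [hconv]
      simp_rw [mul_assoc]
      rw [integral_const_mul]
    simp only [h1]
    exact (hconv _).symm
  have hgoal_eq : (∑ i, ∑ j, lam i * (starRingEnd ℂ) (lam j) *
        (fun s t : G => ∫ v, ∫ w, ((f v : ℂ) * (f w : ℂ)) * k₀ (s * v) (t * w) ∂μ ∂μ)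
          (s j) (s i))
      = ∑ i, ∑ j, lam i * (starRingEnd ℂ) (lam j) *
          ∫ v, ∫ w, k₀ (s j * v) (s i * w) ∂ν ∂ν := by
    refine Finset.sum_congr rfl fun i _ => Finset.sum_congr rfl fun j _ => ?_
    show lam i * (starRingEnd ℂ) (lam j) *
        (∫ v, ∫ w, ((f v : ℂ) * (f w : ℂ)) * k₀ (s j * v) (s i * w) ∂μ ∂μ) = _
    rw [hterm i j]
  rw [hgoal_eq]
  -- the combined kernel
  set Q : G → G → ℂ :=
    fun v w => ∑ i, ∑ j, lam i * (starRingEnd ℂ) (lam j) * k₀ (s j * v) (s i * w) with hQ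
  have hQm : Measurable fun p : G × G => Q p.1 p.2 := by
    apply Finset.measurable_sum
    intro i _
    apply Finset.measurable_sum
    intro j _
    exact (hkmeas i j).const_mul _
  have hQb : ∀ v w, ‖Q v w‖ ≤ ∑ i, ∑ j, ‖lam i‖ * ‖lam j‖ * C := by
    intro v w
    refine (norm_sum_le _ _).trans (Finset.sum_le_sum fun i _ => ?_)
    refine (norm_sum_le _ _).trans (Finset.sum_le_sum fun j _ => ?_)
    rw [norm_mul, norm_mul, RCLike.norm_conj]
    exact mul_le_mul_of_nonneg_left (hC _ _) (by positivity)
  have hQpos : IsPositiveTypeKernel Q := by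
    intro N x c
    have h := hpos (n * N)
      (fun p => s (finProdFinEquiv.symm p).1 * x (finProdFinEquiv.symm p).2)
      (fun p => lam (finProdFinEquiv.symm p).1 * c (finProdFinEquiv.symm p).2)
    refine le_trans h (le_of_eq ?_)
    have swap4 : ∀ F : Fin n → Fin N → Fin n → Fin N → ℂ,
        (∑ i, ∑ a, ∑ j, ∑ b, F i a j b) = ∑ a, ∑ b, ∑ i, ∑ j, F i a j b := by
      intro F
      rw [Finset.sum_comm]
      refine Finset.sum_congr rfl fun a _ => ?_
      calc (∑ i, ∑ j, ∑ b, F i a j b)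
          = ∑ i, ∑ b, ∑ j, F i a j b :=
            Finset.sum_congr rfl fun i _ => Finset.sum_comm
        _ = ∑ b, ∑ i, ∑ j, F i a j b := Finset.sum_comm
    calc (∑ p : Fin (n * N), ∑ q : Fin (n * N),
          (lam (finProdFinEquiv.symm p).1 * c (finProdFinEquiv.symm p).2) *
            (starRingEnd ℂ) (lam (finProdFinEquiv.symm q).1 * c (finProdFinEquiv.symm q).2) *
            k₀ (s (finProdFinEquiv.symm q).1 * x (finProdFinEquiv.symm q).2)
               (s (finProdFinEquiv.symm p).1 * x (finProdFinEquiv.symm p).2))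
        = ∑ p : Fin n × Fin N, ∑ q : Fin n × Fin N,
            (lam p.1 * c p.2) * (starRingEnd ℂ) (lam q.1 * c q.2) *
              k₀ (s q.1 * x q.2) (s p.1 * x p.2) := by
          rw [← Equiv.sum_comp (finProdFinEquiv : Fin n × Fin N ≃ Fin (n * N))]
          refine Finset.sum_congr rfl fun p _ => ?_
          rw [← Equiv.sum_comp (finProdFinEquiv : Fin n × Fin N ≃ Fin (n * N))]
          simp only [Equiv.symm_apply_apply]
      _ = ∑ i : Fin n, ∑ a : Fin N, ∑ j : Fin n, ∑ b : Fin N,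
            (lam i * c a) * (starRingEnd ℂ) (lam j * c b) *
              k₀ (s j * x b) (s i * x a) := by
          simp only [Fintype.sum_prod_type]
      _ = ∑ a : Fin N, ∑ b : Fin N, ∑ i : Fin n, ∑ j : Fin n,
            (lam i * c a) * (starRingEnd ℂ) (lam j * c b) *
              k₀ (s j * x b) (s i * x a) := swap4 _
      _ = ∑ a, ∑ b, c a * (starRingEnd ℂ) (c b) * Q (x b) (x a) := by
          refine Finset.sum_congr rfl fun a _ => Finset.sum_congr rfl fun b _ => ?_
          rw [hQ]
          simp only [Finset.mul_sum]
          refine Finset.sum_congr rfl fun i _ => Finset.sum_congr rfl fun j _ => ?_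
          simp only [map_mul]
          ring
  -- integrabilities to push sums into the ν-integrals
  have hw_int : ∀ (i j : Fin n) (v : G),
      Integrable (fun w => lam i * (starRingEnd ℂ) (lam j) * k₀ (s j * v) (s i * w)) ν := by
    intro i j v
    refine (integrable_const (‖lam i * (starRingEnd ℂ) (lam j)‖ * C)).mono'
      ?_ (Filter.Eventually.of_forall fun w => ?_)
    · exact ((hmeas.comp (measurable_const.prodMk
        (measurable_const.mul measurable_id))).const_mul _).aestronglyMeasurable
    · rw [norm_mul]
      exact mul_le_mul_of_nonneg_left (hC _ _) (norm_nonneg _)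
  have hv_int : ∀ i j : Fin n,
      Integrable (fun v => lam i * (starRingEnd ℂ) (lam j) *
        ∫ w, k₀ (s j * v) (s i * w) ∂ν) ν := by
    intro i j
    refine (integrable_const (‖lam i * (starRingEnd ℂ) (lam j)‖ * C)).mono'
      ((hinner_meas i j).const_mul _).aestronglyMeasurable
      (Filter.Eventually.of_forall fun v => ?_)
    rw [norm_mul]
    exact mul_le_mul_of_nonneg_left (hinner_bdd i j v) (norm_nonneg _)
  have hfinal : (∑ i, ∑ j, lam i * (starRingEnd ℂ) (lam j) *
        ∫ v, ∫ w, k₀ (s j * v) (s i * w) ∂ν ∂ν)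
      = ∫ v, ∫ w, Q v w ∂ν ∂ν := by
    calc (∑ i, ∑ j, lam i * (starRingEnd ℂ) (lam j) *
          ∫ v, ∫ w, k₀ (s j * v) (s i * w) ∂ν ∂ν)
        = ∑ i, ∑ j, ∫ v, lam i * (starRingEnd ℂ) (lam j) *
            ∫ w, k₀ (s j * v) (s i * w) ∂ν ∂ν := by
          refine Finset.sum_congr rfl fun i _ => Finset.sum_congr rfl fun j _ => ?_
          rw [integral_const_mul]
      _ = ∫ v, ∑ i, ∑ j, (lam i * (starRingEnd ℂ) (lam j) *
            ∫ w, k₀ (s j * v) (s i * w) ∂ν) ∂ν := by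
          rw [integral_finset_sum _ fun i _ => integrable_finset_sum _ fun j _ => hv_int i j]
          refine Finset.sum_congr rfl fun i _ => ?_
          rw [integral_finset_sum _ fun j _ => hv_int i j]
      _ = ∫ v, ∫ w, Q v w ∂ν ∂ν := by
          refine integral_congr_ae (Filter.Eventually.of_forall fun v => ?_)
          calc (∑ i, ∑ j, lam i * (starRingEnd ℂ) (lam j) *
                ∫ w, k₀ (s j * v) (s i * w) ∂ν)
              = ∑ i, ∑ j, ∫ w, lam i * (starRingEnd ℂ) (lam j) *
                  k₀ (s j * v) (s i * w) ∂ν := by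
                refine Finset.sum_congr rfl fun i _ => Finset.sum_congr rfl fun j _ => ?_
                rw [integral_const_mul]
            _ = ∫ w, Q v w ∂ν := by
                rw [integral_finset_sum _ fun i _ =>
                  integrable_finset_sum _ fun j _ => hw_int i j v]
                refine Finset.sum_congr rfl fun i _ => ?_
                rw [integral_finset_sum _ fun j _ => hw_int i j v]
  rw [hfinal]
  exact integral_integral_nonneg_of_posType ν Q hQm _ hQb hQpos
end

section
/- Let u : G → H be a uniform embedding of a l.c.s.c. group into a Hilbert space, and k₀(s,t) = ‖u(s) - u(t)‖². Let f be a cut-off function and define k(s,t) = ∫∫ f(v) f(w) k₀(sv, tw) dμ(v) dμ(w) and φ(s,t) = ‖(u*f)(s) - (u*f)(t)‖², where (u*f)(t) is the weak integral ∫ f(s⁻¹t) u(s) dμ(s). Then φ(s,t) = k(s,t) - (k(s,s) + k(t,t))/2 for all s, t ∈ G. -/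
open MeasureTheory
open scoped RealInnerProductSpace

private lemma smoothing_aux_integrable
    {G : Type*} [MeasurableSpace G] [TopologicalSpace G] [OpensMeasurableSpace G]
    (μ : Measure G) [IsFiniteMeasureOnCompacts μ]
    {E : Type*} [NormedAddCommGroup E] [NormedSpace ℝ E]
    {f : G → ℝ} (hfc : Continuous f) (hfs : HasCompactSupport f) (hf0 : ∀ t, 0 ≤ f t)
    {g : G → E} (hg : AEStronglyMeasurable g μ) {C : ℝ}
    (hC : ∀ v ∈ tsupport f, ‖g v‖ ≤ C) :
    Integrable (fun v => f v • g v) μ := by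
  have hCf : Integrable (fun v => f v * max C 0) μ :=
    (hfc.integrable_of_hasCompactSupport hfs).mul_const _
  refine hCf.mono' (hfc.aestronglyMeasurable.smul hg)
    (Filter.Eventually.of_forall fun v => ?_)
  rw [norm_smul, Real.norm_eq_abs, abs_of_nonneg (hf0 v)]
  by_cases hv : v ∈ tsupport f
  · exact mul_le_mul_of_nonneg_left ((hC v hv).trans (le_max_left _ _)) (hf0 v)
  · simp [image_eq_zero_of_notMem_tsupport hv]

theorem smoothing_identity_for_neg_type_kernel
    {G : Type*} [TopologicalSpace G] [Group G] [IsTopologicalGroup G]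
    [LocallyCompactSpace G] [SecondCountableTopology G] [T2Space G]
    [MeasurableSpace G] [BorelSpace G]
    (μ : Measure G) [μ.IsHaarMeasure]
    {H : Type*} [NormedAddCommGroup H] [InnerProductSpace ℝ H] [CompleteSpace H]
    [SecondCountableTopology H] [MeasurableSpace H] [BorelSpace H]
    (u : G → H) (humeas : Measurable u)
    (hbdd : ∀ K : Set G, IsCompact K → ∃ R : ℝ, ∀ s t : G, s⁻¹ * t ∈ K → ‖u s - u t‖ ≤ R)
    (f : G → ℝ) (hfc : Continuous f) (hfs : HasCompactSupport f)
    (hf0 : ∀ t, 0 ≤ f t) (hfsymm : ∀ t, f t⁻¹ = f t) (hf1 : ∫ t, f t ∂μ = 1) :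
    ∀ s t : G,
      ‖(∫ x, f (x⁻¹ * s) • u x ∂μ) - (∫ x, f (x⁻¹ * t) • u x ∂μ)‖ ^ 2 =
        (∫ v, ∫ w, f v * f w * ‖u (s * v) - u (t * w)‖ ^ 2 ∂μ ∂μ) -
          ((∫ v, ∫ w, f v * f w * ‖u (s * v) - u (s * w)‖ ^ 2 ∂μ ∂μ) +
           (∫ v, ∫ w, f v * f w * ‖u (t * v) - u (t * w)‖ ^ 2 ∂μ ∂μ)) / 2 := by
  obtain ⟨R, hR⟩ := hbdd (tsupport f) hfs
  set F : G → H := fun p => ∫ v, f v • u (p * v) ∂μ with hF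
  set B : G → ℝ := fun p => ∫ v, f v * ‖u (p * v)‖ ^ 2 ∂μ with hB
  have hfint : Integrable f μ := hfc.integrable_of_hasCompactSupport hfs
  -- boundedness of v ↦ u (p * v) on the support of f
  have hbnd : ∀ p : G, ∀ v ∈ tsupport f, ‖u (p * v)‖ ≤ ‖u p‖ + max R 0 := by
    intro p v hv
    have h1 : ‖u p - u (p * v)‖ ≤ R := hR p (p * v) (by simpa using hv)
    calc ‖u (p * v)‖ = ‖u p - (u p - u (p * v))‖ := by rw [sub_sub_cancel]
      _ ≤ ‖u p‖ + ‖u p - u (p * v)‖ := norm_sub_le _ _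
      _ ≤ ‖u p‖ + max R 0 := by
          exact add_le_add_right (h1.trans (le_max_left _ _)) _
  have hbnd0 : ∀ p : G, (0:ℝ) ≤ ‖u p‖ + max R 0 :=
    fun p => add_nonneg (norm_nonneg _) (le_max_right _ _)
  have hmu : ∀ p : G, Measurable (fun v => u (p * v)) :=
    fun p => humeas.comp (measurable_const_mul p)
  -- integrability facts
  have hFI : ∀ p : G, Integrable (fun v => f v • u (p * v)) μ := by
    intro p
    exact smoothing_aux_integrable μ hfc hfs hf0 (hmu p).aestronglyMeasurable (hbnd p)
  have hBI : ∀ p : G, Integrable (fun v => f v * ‖u (p * v)‖ ^ 2) μ := by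
    intro p
    have := smoothing_aux_integrable μ hfc hfs hf0
      (g := fun v => ‖u (p * v)‖ ^ 2) ((hmu p).norm.pow_const 2).aestronglyMeasurable
      (C := (‖u p‖ + max R 0) ^ 2) ?_
    · simpa [smul_eq_mul] using this
    · intro v hv
      rw [Real.norm_eq_abs, abs_of_nonneg (by positivity)]
      exact pow_le_pow_left₀ (norm_nonneg _) (hbnd p v hv) 2
  have hII : ∀ (p : G) (c : H), Integrable (fun v => f v * ⟪c, u (p * v)⟫) μ := by
    intro p c
    have := smoothing_aux_integrable μ hfc hfs hf0
      (g := fun v => ⟪c, u (p * v)⟫)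
      (measurable_const.inner (hmu p)).aestronglyMeasurable
      (C := ‖c‖ * (‖u p‖ + max R 0)) ?_
    · simpa [smul_eq_mul] using this
    · intro v hv
      calc ‖⟪c, u (p * v)⟫‖ ≤ ‖c‖ * ‖u (p * v)‖ := norm_inner_le_norm _ _
        _ ≤ ‖c‖ * (‖u p‖ + max R 0) :=
            mul_le_mul_of_nonneg_left (hbnd p v hv) (norm_nonneg _)
  -- ⟪c, F p⟫ = ∫ f v * ⟪c, u (p v)⟫
  have hinn : ∀ (p : G) (c : H), (∫ v, f v * ⟪c, u (p * v)⟫ ∂μ) = ⟪c, F p⟫ := by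
    intro p c
    have h := integral_inner (𝕜 := ℝ) (hFI p) c
    simp_rw [real_inner_smul_right] at h
    exact h
  -- change of variables
  have hCV : ∀ p : G, (∫ x, f (x⁻¹ * p) • u x ∂μ) = F p := by
    intro p
    have h := MeasureTheory.integral_mul_left_eq_self
      (μ := μ) (f := fun x => f (x⁻¹ * p) • u x) p
    rw [← h, hF]
    congr 1
    ext v
    have : (p * v)⁻¹ * p = v⁻¹ := by group
    rw [this, hfsymm]
  -- the key double-integral computation
  have key : ∀ p q : G,
      (∫ v, ∫ w, f v * f w * ‖u (p * v) - u (q * w)‖ ^ 2 ∂μ ∂μ)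
        = B p + B q - 2 * ⟪F q, F p⟫ := by
    intro p q
    have inner_eq : ∀ v : G,
        (∫ w, f v * f w * ‖u (p * v) - u (q * w)‖ ^ 2 ∂μ)
          = (f v * ‖u (p * v)‖ ^ 2 + f v * B q) - 2 * (f v * ⟪F q, u (p * v)⟫) := by
      intro v
      set a := u (p * v) with ha
      have e1 : ∀ w, f v * f w * ‖a - u (q * w)‖ ^ 2
          = f v * ((f w * ‖a‖ ^ 2 + f w * ‖u (q * w)‖ ^ 2) - 2 * (f w * ⟪a, u (q * w)⟫)) := by
        intro w
        rw [@norm_sub_sq_real]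
        ring
      have h1 : Integrable (fun w => f w * ‖a‖ ^ 2) μ := hfint.mul_const _
      have h2 : Integrable (fun w => f w * ‖u (q * w)‖ ^ 2) μ := hBI q
      have h3 : Integrable (fun w => 2 * (f w * ⟪a, u (q * w)⟫)) μ :=
        (hII q a).const_mul 2
      have h12 : Integrable (fun w => f w * ‖a‖ ^ 2 + f w * ‖u (q * w)‖ ^ 2) μ := h1.add h2
      simp_rw [e1]
      rw [integral_const_mul, integral_sub h12 h3, integral_add h1 h2,
        integral_const_mul, integral_mul_const, hf1, hinn q a, one_mul]
      rw [real_inner_comm a (F q)]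
      ring
    have h1 : Integrable (fun v => f v * ‖u (p * v)‖ ^ 2) μ := hBI p
    have h2 : Integrable (fun v => f v * B q) μ := hfint.mul_const _
    have h3 : Integrable (fun v => 2 * (f v * ⟪F q, u (p * v)⟫)) μ :=
      (hII p (F q)).const_mul 2
    have h12 : Integrable (fun v => f v * ‖u (p * v)‖ ^ 2 + f v * B q) μ := h1.add h2
    simp_rw [inner_eq]
    rw [integral_sub h12 h3, integral_add h1 h2, integral_const_mul,
      integral_mul_const, hf1, hinn p (F q), one_mul]
  -- put everything together
  intro s t
  rw [hCV s, hCV t, key s t, key s s, key t t, @norm_sub_sq_real,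
    real_inner_comm (F t) (F s), real_inner_self_eq_norm_sq, real_inner_self_eq_norm_sq]
  ring
end

section
/- Let G be a l.c.s.c. group. If for every compact K ⊆ G and ε > 0 there exist a compact L ⊆ G and a (not necessarily continuous) map η : G → L¹(G) with ‖η_t‖₁ = 1, supp η_t ⊆ tL for all t, and sup_{(s,t): s⁻¹t ∈ K} ‖η_s - η_t‖₁ < ε, then the same holds with η additionally Borel measurable (as a map into L¹(G)) and piecewise constant on a countable Borel partition of G. -/
open MeasureTheory Pointwise

theorem exists_borel_piecewise_constant_property_A_maps
    {G : Type*} [TopologicalSpace G] [Group G] [IsTopologicalGroup G]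
    [LocallyCompactSpace G] [SecondCountableTopology G] [T2Space G]
    [MeasurableSpace G] [BorelSpace G]
    (μ : Measure G) [μ.IsHaarMeasure]
    (hyp : ∀ K : Set G, IsCompact K → ∀ ε > (0 : ℝ),
      ∃ L : Set G, IsCompact L ∧
        ∃ η : G → Lp ℝ 1 μ,
          (∀ t : G, ‖η t‖ = 1) ∧
          (∀ t : G, ∀ᵐ s ∂μ, s ∉ (fun x => t * x) '' L → (η t : G → ℝ) s = 0) ∧
          (∀ s t : G, s⁻¹ * t ∈ K → ‖η s - η t‖ < ε)) :
    ∀ K : Set G, IsCompact K → ∀ ε > (0 : ℝ),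
      ∃ L : Set G, IsCompact L ∧
        ∃ η : G → Lp ℝ 1 μ,
          StronglyMeasurable η ∧
          (∃ Cn : ℕ → Set G,
            (∀ n, MeasurableSet (Cn n)) ∧
            Pairwise (Function.onFun Disjoint Cn) ∧
            (⋃ n, Cn n) = Set.univ ∧
            ∀ n, ∀ s ∈ Cn n, ∀ t ∈ Cn n, η s = η t) ∧
          (∀ t : G, ‖η t‖ = 1) ∧
          (∀ t : G, ∀ᵐ s ∂μ, s ∉ (fun x => t * x) '' L → (η t : G → ℝ) s = 0) ∧
          (∀ s t : G, s⁻¹ * t ∈ K → ‖η s - η t‖ < ε) := by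
  classical
  intro K hK ε hε
  -- a compact neighborhood V of 1
  obtain ⟨V, hVc, hV1⟩ := exists_compact_mem_nhds (1 : G)
  set U := interior V with hUdef
  have hUopen : IsOpen U := isOpen_interior
  have h1U : (1 : G) ∈ U := mem_interior_iff_mem_nhds.2 hV1
  have hUV : U ⊆ V := interior_subset
  -- apply hypothesis to the enlarged compact set
  have hK' : IsCompact (V * K * V⁻¹) := (hVc.mul hK).mul hVc.inv
  obtain ⟨L, hLc, η0, hnorm, hsupp, heps⟩ := hyp _ hK' ε hε
  -- countable cover of G by left translates of U
  obtain ⟨S, hScount, hScover⟩ :=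
    TopologicalSpace.countable_cover_nhds
      (f := fun x : G => (fun y => x * y) '' U) (fun x => by
        have : IsOpen ((fun y => x * y) '' U) := isOpenMap_mul_left x U hUopen
        exact this.mem_nhds ⟨1, h1U, mul_one x⟩)
  have hSne : S.Nonempty := by
    have h1 : (1 : G) ∈ ⋃ x ∈ S, (fun y => x * y) '' U := hScover ▸ Set.mem_univ 1
    obtain ⟨x, hx, -⟩ := Set.mem_iUnion₂.1 h1
    exact ⟨x, hx⟩
  obtain ⟨e, hSe⟩ := hScount.exists_eq_range hSne
  have hcov : ∀ t : G, ∃ n : ℕ, t ∈ (fun y => e n * y) '' U := by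
    intro t
    have : t ∈ ⋃ x ∈ S, (fun y => x * y) '' U := hScover ▸ Set.mem_univ t
    obtain ⟨x, hxS, hx⟩ := Set.mem_iUnion₂.1 this
    rw [hSe] at hxS
    obtain ⟨n, rfl⟩ := hxS
    exact ⟨n, hx⟩
  -- the index function and representative function
  set nf : G → ℕ := fun t => Nat.find (hcov t) with hnf
  have hmem : ∀ t : G, t ∈ (fun y => e (nf t) * y) '' U := fun t => Nat.find_spec (hcov t)
  set rep : G → G := fun t => e (nf t) with hrep
  -- key fact: rep t = t * u⁻¹ for some u ∈ V
  have hrepV : ∀ t : G, ∃ u ∈ V, rep t = t * u⁻¹ := by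
    intro t
    obtain ⟨u, huU, hu⟩ := hmem t
    refine ⟨u, hUV huU, ?_⟩
    simp only at hu
    exact eq_mul_inv_iff_mul_eq.2 hu
  refine ⟨V⁻¹ * L, hVc.inv.mul hLc, fun t => η0 (rep t), ?_, ?_, ?_, ?_, ?_⟩
  · -- strongly measurable
    have hnf_meas : Measurable nf := by
      apply measurable_to_countable'
      intro n
      have : nf ⁻¹' {n} =
          ((fun y => e n * y) '' U) \ ⋃ m ∈ Finset.range n, ((fun y => e m * y) '' U) := by
        ext t
        simp only [Set.mem_preimage, Set.mem_singleton_iff, Set.mem_diff, Set.mem_iUnion,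
          Finset.mem_range, hnf]
        rw [Nat.find_eq_iff]
        constructor
        · rintro ⟨h1, h2⟩
          exact ⟨h1, fun ⟨m, hmn, hmem'⟩ => h2 m hmn hmem'⟩
        · rintro ⟨h1, h2⟩
          exact ⟨h1, fun m hmn hmem' => h2 ⟨m, hmn, hmem'⟩⟩
      rw [this]
      exact ((isOpenMap_mul_left (e n) U hUopen).measurableSet).diff
        (MeasurableSet.biUnion (Set.to_countable _)
          (fun m _ => (isOpenMap_mul_left (e m) U hUopen).measurableSet))
    borelize ↥(Lp ℝ 1 μ)
    rw [stronglyMeasurable_iff_measurable_separable]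
    constructor
    · exact (measurable_from_top (f := fun n : ℕ => η0 (e n))).comp hnf_meas
    · apply Set.Countable.isSeparable
      have : Set.range (fun t => η0 (rep t)) ⊆ Set.range (fun n : ℕ => η0 (e n)) := by
        rintro _ ⟨t, rfl⟩
        exact ⟨nf t, rfl⟩
      exact (Set.countable_range _).mono this
  · -- piecewise constant
    refine ⟨fun n => nf ⁻¹' {n}, ?_, ?_, ?_, ?_⟩
    · intro n
      show MeasurableSet (nf ⁻¹' {n})
      have : nf ⁻¹' {n} =
          ((fun y => e n * y) '' U) \ ⋃ m ∈ Finset.range n, ((fun y => e m * y) '' U) := by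
        ext t
        simp only [Set.mem_preimage, Set.mem_singleton_iff, Set.mem_diff, Set.mem_iUnion,
          Finset.mem_range, hnf]
        rw [Nat.find_eq_iff]
        constructor
        · rintro ⟨h1, h2⟩
          exact ⟨h1, fun ⟨m, hmn, hmem'⟩ => h2 m hmn hmem'⟩
        · rintro ⟨h1, h2⟩
          exact ⟨h1, fun m hmn hmem' => h2 ⟨m, hmn, hmem'⟩⟩
      rw [this]
      exact ((isOpenMap_mul_left (e n) U hUopen).measurableSet).diff
        (MeasurableSet.biUnion (Set.to_countable _)
          (fun m _ => (isOpenMap_mul_left (e m) U hUopen).measurableSet))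
    · intro m n hmn
      simp only [Function.onFun, Set.disjoint_left]
      intro t htm htn
      exact hmn (htm.symm.trans htn)
    · ext t
      simp only [Set.mem_iUnion, Set.mem_preimage, Set.mem_singleton_iff, Set.mem_univ,
        iff_true]
      exact ⟨nf t, rfl⟩
    · intro n s hs t ht
      simp only [Set.mem_preimage, Set.mem_singleton_iff] at hs ht
      simp only [hrep, hs, ht]
  · -- norm
    intro t
    exact hnorm (rep t)
  · -- support
    intro t
    filter_upwards [hsupp (rep t)] with s hs hsnot
    apply hs
    intro ⟨l, hl, hls⟩
    apply hsnot
    obtain ⟨u, huV, hu⟩ := hrepV t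
    refine ⟨u⁻¹ * l, ⟨u⁻¹, Set.inv_mem_inv.2 huV, l, hl, rfl⟩, ?_⟩
    simp only
    rw [← mul_assoc, ← hu]
    exact hls
  · -- epsilon estimate
    intro s t hst
    obtain ⟨a, haV, ha⟩ := hrepV s
    obtain ⟨b, hbV, hb⟩ := hrepV t
    have hmemK' : (rep s)⁻¹ * rep t ∈ V * K * V⁻¹ := by
      rw [ha, hb]
      have heq : (s * a⁻¹)⁻¹ * (t * b⁻¹) = a * (s⁻¹ * t) * b⁻¹ := by group
      rw [heq]
      exact Set.mul_mem_mul (Set.mul_mem_mul haV hst) (Set.inv_mem_inv.2 hbV)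
    exact heps _ _ hmemK'
end
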